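/- Let G be a connected graph with Perron vector x, and let u, v be vertices with x_u ≥ x_v. Let v_1,…,v_s be vertices adjacent to v but not adjacent to u and distinct from u. Let G* be obtained from G by deleting the edges v v_i and adding the edges u v_i for 1 ≤ i ≤ s. Then ρ(G*) > ρ(G). -/

import Mathlib

open SimpleGraph Finset

open scoped Classical in
/-- The adjacency matrix of a graph over `ℝ` (using classical decidability). -/
noncomputable def adjMat {V : Type*} [Fintype V] [DecidableEq V] (G : SimpleGraph V) :
    Matrix V V ℝ :=
  fun a b => if G.Adj a b then 1 else 0

theorem adjMat_isHermitian {V : Type*} [Fintype V] [DecidableEq V] (G : SimpleGraph V) :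
    (adjMat G).IsHermitian := by
  ext a b
  rw [Matrix.conjTranspose_apply]
  by_cases h : G.Adj a b
  · simp [adjMat, h, h.symm]
  · simp [adjMat, h, mt (fun h' : G.Adj b a => h'.symm) h]

/-- The spectral radius (specRad) (largest adjacency eigenvalue) of a graph. -/
noncomputable def specRad {V : Type*} [Fintype V] [DecidableEq V]
    (G : SimpleGraph V) : ℝ :=
  ⨆ a : V, (adjMat_isHermitian G).eigenvalues a

/-- A cactus: any two distinct cycles (distinct as edge sets) share at most one vertex. -/
def IsCactus {V : Type*} [DecidableEq V] (G : SimpleGraph V) : Prop :=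
  ∀ ⦃u v : V⦄ (c₁ : G.Walk u u) (c₂ : G.Walk v v), c₁.IsCycle → c₂.IsCycle →
    c₁.edges.toFinset ≠ c₂.edges.toFinset →
      (c₁.support.toFinset ∩ c₂.support.toFinset).card ≤ 1

/-- A unicyclic graph: connected with exactly one cycle (one cycle edge set). -/
def Unicyclic {V : Type*} [DecidableEq V] (G : SimpleGraph V) : Prop :=
  G.Connected ∧ ∃! E : Finset (Sym2 V), ∃ (w : V) (c : G.Walk w w),
    c.IsCycle ∧ c.edges.toFinset = E

/-- The star `K_{1,n-1}` on `Fin n` with center `0`. -/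
def starGraph (n : ℕ) : SimpleGraph (Fin n) where
  Adj a b := a ≠ b ∧ ((a : ℕ) = 0 ∨ (b : ℕ) = 0)
  symm := by constructor; intros; tauto
  loopless := by constructor; intros; tauto

/-- `K_{1,n-1}^+`: the star plus one edge between the leaves `1` and `2`. -/
def starPlus (n : ℕ) : SimpleGraph (Fin n) where
  Adj a b := a ≠ b ∧ ((a : ℕ) = 0 ∨ (b : ℕ) = 0 ∨ ((a : ℕ) ≤ 2 ∧ (b : ℕ) ≤ 2))
  symm := by constructor; intros; tauto
  loopless := by constructor; intros; tauto

/-- `H_n`: the star `K_{1,n-1}` plus `⌊(n-1)/2⌋` independent edges `(1,2), (3,4), …`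
between pairs of leaves. -/
def Hgraph (n : ℕ) : SimpleGraph (Fin n) where
  Adj a b := a ≠ b ∧ ((a : ℕ) = 0 ∨ (b : ℕ) = 0 ∨
    ((a : ℕ) % 2 = 1 ∧ (b : ℕ) = a + 1) ∨ ((b : ℕ) % 2 = 1 ∧ (a : ℕ) = b + 1))
  symm := by constructor; intros; tauto
  loopless := by constructor; intros; tauto

/-- Rewiring: delete the edges `v w` and add the edges `u w` for `w ∈ S`. -/
def rewire {V : Type*} (G : SimpleGraph V) (u v : V) (S : Set V) : SimpleGraph V :=
  SimpleGraph.fromEdgeSet ((G.edgeSet \ {e | ∃ w ∈ S, e = s(v, w)}) ∪ {e | ∃ w ∈ S, e = s(u, w)})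

/-- An edge lies in a triangle of `G`. -/
def InTriangle {V : Type*} (G : SimpleGraph V) (e : Sym2 V) : Prop :=
  ∃ a b c : V, G.Adj a b ∧ G.Adj b c ∧ G.Adj a c ∧
    (e = s(a, b) ∨ e = s(b, c) ∨ e = s(a, c))

open Matrix

/-- Auxiliary: for a real symmetric matrix `B`, the matrix `μ • 1 - B` with `μ` the largest
eigenvalue is positive semidefinite. -/
lemma sup_smul_one_sub_posSemidef {n : Type*} [Fintype n] [DecidableEq n] [Nonempty n]
    {B : Matrix n n ℝ} (hB : B.IsHermitian) :
    Matrix.PosSemidef ((⨆ i, hB.eigenvalues i) • (1 : Matrix n n ℝ) - B) := by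
  set μ := ⨆ i, hB.eigenvalues i with hμdef
  have hle : ∀ i, hB.eigenvalues i ≤ μ := fun i =>
    le_ciSup (Set.Finite.bddAbove (Set.finite_range _)) i
  have hU : (hB.eigenvectorUnitary : Matrix n n ℝ) *
      star (hB.eigenvectorUnitary : Matrix n n ℝ) = 1 :=
    Matrix.mem_unitaryGroup_iff.mp hB.eigenvectorUnitary.2
  have key : μ • (1 : Matrix n n ℝ) - B =
      (hB.eigenvectorUnitary : Matrix n n ℝ) *
        Matrix.diagonal (fun i => μ - hB.eigenvalues i) *
        (hB.eigenvectorUnitary : Matrix n n ℝ)ᴴ := by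
    have hD : Matrix.diagonal (fun i => μ - hB.eigenvalues i) =
        μ • (1 : Matrix n n ℝ) - Matrix.diagonal (RCLike.ofReal ∘ hB.eigenvalues) := by
      ext a b
      by_cases h : a = b <;>
        simp [Matrix.diagonal, h, Matrix.one_apply, Matrix.smul_apply, Matrix.sub_apply]
    rw [hD, Matrix.mul_sub, Matrix.sub_mul, ← Matrix.star_eq_conjTranspose,
      ]
    conv_lhs => rw [hB.spectral_theorem, Unitary.conjStarAlgAut_apply]
    congr 1
    rw [Matrix.mul_smul, Matrix.smul_mul, mul_one, hU]
  rw [key]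
  exact (Matrix.PosSemidef.diagonal
    (fun i => sub_nonneg.mpr (hle i))).mul_mul_conjTranspose_same _

theorem specRad_lt_specRad_rewire {V : Type*} [Fintype V] [DecidableEq V]
    (G : SimpleGraph V) (hG : G.Connected) (x : V → ℝ)
    (hpos : ∀ w, 0 < x w) (hunit : ∑ w, x w ^ 2 = 1)
    (heig : (adjMat G).mulVec x = specRad G • x)
    (u v : V) (S : Finset V) (hS : S.Nonempty)
    (hSv : ∀ w ∈ S, G.Adj v w) (hSu : ∀ w ∈ S, ¬ G.Adj u w ∧ w ≠ u)
    (hx : x v ≤ x u) :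
    specRad G < specRad (rewire G u v ↑S) := by
  classical
  have hne : Nonempty V := hG.nonempty
  set A := adjMat G with hAdef
  set B := adjMat (rewire G u v ↑S) with hBdef
  set ρ := specRad G with hρdef
  obtain ⟨w0, hw0⟩ := hS
  have huv : u ≠ v := by
    rintro rfl
    exact (hSu w0 hw0).1 (hSv w0 hw0)
  have hvS : v ∉ S := fun h => (G.loopless.irrefl v) (hSv v h)
  have huS : u ∉ S := fun h => (hSu u h).2 rfl
  -- membership in the deleted/added edge sets
  have hmem : ∀ (a b c : V),
      (s(a, b) ∈ {e : Sym2 V | ∃ w ∈ (↑S : Set V), e = s(c, w)}) ↔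
        ((a = c ∧ b ∈ S) ∨ (b = c ∧ a ∈ S)) := by
    intro a b c
    simp only [Set.mem_setOf_eq, Finset.mem_coe]
    constructor
    · rintro ⟨w, hw, h⟩
      rw [Sym2.eq_iff] at h
      rcases h with ⟨rfl, rfl⟩ | ⟨rfl, rfl⟩
      · exact Or.inl ⟨rfl, hw⟩
      · exact Or.inr ⟨rfl, hw⟩
    · rintro (⟨rfl, hb⟩ | ⟨rfl, ha⟩)
      · exact ⟨b, hb, rfl⟩
      · exact ⟨a, ha, Sym2.eq_swap⟩
  -- adjacency in the rewired graph
  have hadj : ∀ a b : V, (rewire G u v ↑S).Adj a b ↔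
      ((G.Adj a b ∧ ¬((a = v ∧ b ∈ S) ∨ (b = v ∧ a ∈ S))) ∨
        ((a = u ∧ b ∈ S) ∨ (b = u ∧ a ∈ S))) := by
    intro a b
    rw [rewire, SimpleGraph.fromEdgeSet_adj, Set.mem_union, Set.mem_diff,
      SimpleGraph.mem_edgeSet]
    constructor
    · rintro ⟨⟨he, hd⟩ | hadd, _⟩
      · exact Or.inl ⟨he, fun hc => hd ((hmem a b v).mpr hc)⟩
      · exact Or.inr ((hmem a b u).mp hadd)
    · rintro (⟨hab, hnd⟩ | hadd)
      · exact ⟨Or.inl ⟨hab, fun hc => hnd ((hmem a b v).mp hc)⟩, hab.ne⟩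
      · refine ⟨Or.inr ((hmem a b u).mpr hadd), ?_⟩
        rcases hadd with ⟨rfl, hb⟩ | ⟨rfl, ha⟩
        · exact fun h => (hSu b hb).2 h.symm
        · exact (hSu a ha).2
  -- entrywise formula for the new adjacency matrix
  have key : ∀ a b, B a b = A a b +
      ((if a = u ∧ b ∈ S then (1 : ℝ) else 0) + (if b = u ∧ a ∈ S then 1 else 0)
        - (if a = v ∧ b ∈ S then 1 else 0) - (if b = v ∧ a ∈ S then 1 else 0)) := by
    intro a b
    simp only [hBdef, hAdef, adjMat]
    by_cases h1 : a = u ∧ b ∈ S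
    · obtain ⟨hau, hb⟩ := h1
      have h2 : ¬(b = u ∧ a ∈ S) := fun h => (hSu b hb).2 h.1
      have h3 : ¬(a = v ∧ b ∈ S) := fun h => huv (hau.symm.trans h.1)
      have h4 : ¬(b = v ∧ a ∈ S) := fun h => huS (hau ▸ h.2)
      have hadj' : (rewire G u v ↑S).Adj a b := (hadj a b).mpr (Or.inr (Or.inl ⟨hau, hb⟩))
      have hnadj : ¬G.Adj a b := by rw [hau]; exact (hSu b hb).1
      have h1' : a = u ∧ b ∈ S := ⟨hau, hb⟩
      rw [if_pos hadj', if_neg hnadj, if_pos h1', if_neg h2, if_neg h3, if_neg h4]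
      norm_num
    · by_cases h2 : b = u ∧ a ∈ S
      · obtain ⟨hbu, ha⟩ := h2
        have h3 : ¬(a = v ∧ b ∈ S) := fun h => hvS (h.1 ▸ ha)
        have h4 : ¬(b = v ∧ a ∈ S) := fun h => huv (hbu.symm.trans h.1)
        have hadj' : (rewire G u v ↑S).Adj a b := (hadj a b).mpr (Or.inr (Or.inr ⟨hbu, ha⟩))
        have hnadj : ¬G.Adj a b := by
          intro h; rw [hbu] at h; exact (hSu a ha).1 h.symm
        have h2' : b = u ∧ a ∈ S := ⟨hbu, ha⟩
        rw [if_pos hadj', if_neg hnadj, if_neg h1, if_pos h2', if_neg h3, if_neg h4]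
        norm_num
      · by_cases h3 : a = v ∧ b ∈ S
        · obtain ⟨hav, hb⟩ := h3
          have h4 : ¬(b = v ∧ a ∈ S) := fun h => hvS (hav ▸ h.2)
          have hnadj : ¬(rewire G u v ↑S).Adj a b := by
            rw [hadj]
            rintro (⟨_, hc⟩ | ⟨hc, hc'⟩ | ⟨hc, hc'⟩)
            · exact hc (Or.inl ⟨hav, hb⟩)
            · exact huv (hc.symm.trans hav)
            · exact (hSu b hb).2 hc
          have hGadj : G.Adj a b := by rw [hav]; exact hSv b hb
          have h3' : a = v ∧ b ∈ S := ⟨hav, hb⟩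
          rw [if_neg hnadj, if_pos hGadj, if_neg h1, if_neg h2, if_pos h3', if_neg h4]
          norm_num
        · by_cases h4 : b = v ∧ a ∈ S
          · obtain ⟨hbv, ha⟩ := h4
            have hnadj : ¬(rewire G u v ↑S).Adj a b := by
              rw [hadj]
              rintro (⟨_, hc⟩ | ⟨hc, hc'⟩ | ⟨hc, hc'⟩)
              · exact hc (Or.inr ⟨hbv, ha⟩)
              · exact (hSu a ha).2 hc
              · exact huv (hc.symm.trans hbv)
            have hGadj : G.Adj a b := by
              rw [hbv]; exact (hSv a ha).symm
            have h4' : b = v ∧ a ∈ S := ⟨hbv, ha⟩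
            rw [if_neg hnadj, if_pos hGadj, if_neg h1, if_neg h2, if_neg h3, if_pos h4']
            norm_num
          · have hiff : (rewire G u v ↑S).Adj a b ↔ G.Adj a b := by
              rw [hadj]; tauto
            by_cases hab : G.Adj a b
            · rw [if_pos (hiff.mpr hab), if_pos hab, if_neg h1, if_neg h2, if_neg h3, if_neg h4]
              norm_num
            · rw [if_neg (fun h => hab (hiff.mp h)), if_neg hab,
                if_neg h1, if_neg h2, if_neg h3, if_neg h4]
              norm_num
  set T := ∑ w ∈ S, x w with hTdef
  have hTpos : 0 < T := Finset.sum_pos (fun w _ => hpos w) ⟨w0, hw0⟩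
  -- row formula for `B *ᵥ x`
  have expand : ∀ a, (B *ᵥ x) a = (A *ᵥ x) a +
      ((if a = u then T else 0) + (if a ∈ S then x u else 0)
        - (if a = v then T else 0) - (if a ∈ S then x v else 0)) := by
    intro a
    have hpt : ∀ b, B a b * x b = A a b * x b +
        ((if a = u ∧ b ∈ S then x b else 0) + (if b = u ∧ a ∈ S then x b else 0)
          - (if a = v ∧ b ∈ S then x b else 0) - (if b = v ∧ a ∈ S then x b else 0)) := by
      intro b
      rw [key a b]
      simp only [add_mul, sub_mul, ite_mul, one_mul, zero_mul]
    have e1 : ∀ c : V, (∑ b, (if a = c ∧ b ∈ S then x b else 0)) =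
        if a = c then T else 0 := by
      intro c
      by_cases h : a = c
      · simp [h, hTdef, Finset.sum_ite_mem]
      · simp [h]
    have e2 : ∀ c : V, (∑ b, (if b = c ∧ a ∈ S then x b else 0)) =
        if a ∈ S then x c else 0 := by
      intro c
      by_cases h : a ∈ S
      · simp [h]
      · simp [h]
    show (∑ b, B a b * x b) = (∑ b, A a b * x b) + _
    rw [Finset.sum_congr rfl (fun b _ => hpt b), Finset.sum_add_distrib,
      Finset.sum_sub_distrib, Finset.sum_sub_distrib, Finset.sum_add_distrib,
      e1 u, e1 v, e2 u, e2 v]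
  -- Rayleigh quotient of x with respect to A
  have hxx : x ⬝ᵥ x = 1 := by
    simpa [dotProduct, sq] using hunit
  have hAq : x ⬝ᵥ (A *ᵥ x) = ρ := by
    rw [hAdef, hρdef, heig, dotProduct_smul]
    rw [← hρdef, ← hAdef] at *
    simp [hxx]
  -- quadratic form identity
  have quad : x ⬝ᵥ (B *ᵥ x) = ρ + 2 * (x u - x v) * T := by
    have : x ⬝ᵥ (B *ᵥ x) = ∑ a, x a * (B *ᵥ x) a := rfl
    rw [this, Finset.sum_congr rfl (fun a _ => by rw [expand a])]
    simp only [mul_add, mul_sub, Finset.sum_add_distrib, Finset.sum_sub_distrib,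
      mul_ite, mul_zero, Finset.sum_ite_eq', Finset.mem_univ, if_true,
      Finset.sum_ite_mem, Finset.univ_inter, ← Finset.sum_mul]
    have hAq' : (∑ a, x a * (A *ᵥ x) a) = ρ := hAq
    rw [hAq']
    ring
  have hBρ : ρ ≤ x ⬝ᵥ (B *ᵥ x) := by
    rw [quad]
    nlinarith [sub_nonneg.mpr hx, hTpos.le]
  -- PSD machinery
  have hBH := adjMat_isHermitian (rewire G u v ↑S)
  set μ := specRad (rewire G u v ↑S) with hμdef
  have hμeq : μ = ⨆ i, hBH.eigenvalues i := rfl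
  have hPSD : Matrix.PosSemidef (μ • (1 : Matrix V V ℝ) - B) := by
    rw [hμeq]; exact sup_smul_one_sub_posSemidef hBH
  have hMx : ∀ y : V → ℝ, (μ • (1 : Matrix V V ℝ) - B) *ᵥ y = μ • y - B *ᵥ y := by
    intro y
    rw [Matrix.sub_mulVec, Matrix.smul_mulVec, Matrix.one_mulVec]
  have hRay : x ⬝ᵥ (B *ᵥ x) ≤ μ := by
    have h0 := hPSD.dotProduct_mulVec_nonneg x
    rw [hMx, dotProduct_sub, dotProduct_smul] at h0
    simp only [star_trivial, smul_eq_mul, hxx, mul_one] at h0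
    linarith
  -- conclude
  by_contra hcon
  push_neg at hcon
  have heq : ρ = μ := le_antisymm (le_trans hBρ hRay) hcon
  have hquadeq : x ⬝ᵥ (B *ᵥ x) = μ := le_antisymm hRay (heq ▸ hBρ)
  have hzero : star x ⬝ᵥ ((μ • (1 : Matrix V V ℝ) - B) *ᵥ x) = 0 := by
    rw [hMx, dotProduct_sub, dotProduct_smul]
    simp only [star_trivial, smul_eq_mul, hxx, mul_one, hquadeq, sub_self]
  have hM0 := (hPSD.dotProduct_mulVec_zero_iff x).mp hzero
  rw [hMx] at hM0
  have hBx : B *ᵥ x = μ • x := by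
    have := sub_eq_zero.mp hM0
    exact this.symm
  -- evaluate row v
  have hrowB : (B *ᵥ x) v = (A *ᵥ x) v - T := by
    rw [expand v]
    have h1 : v ≠ u := huv.symm
    simp [h1, hvS]
    ring
  have hrowA : (A *ᵥ x) v = ρ * x v := by
    rw [hAdef, hρdef, heig]; simp; exact Or.inl hρdef
  rw [hBx, hrowA, ← heq] at hrowB
  simp only [Pi.smul_apply, smul_eq_mul] at hrowB
  linarith
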